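/- For any n-variable Boolean function f, if g and h are Boolean functions with g·f = h and h ≠ 0, then deg(h) ≥ AI(f). Moreover, if additionally 1 ≤ deg(g) < AI(f), then deg(g) + deg(h) ≥ 1 + AI(f). -/
import Mathlib


abbrev BF (n : ℕ) := (Fin n → ZMod 2) → ZMod 2

/-- Hamming weight of a vector in `F₂ⁿ`. -/
def wtv {n : ℕ} (x : Fin n → ZMod 2) : ℕ :=
  (Finset.univ.filter fun i => x i = 1).card

/-- ANF coefficient `a_α = ⊕_{z ≤ α} f(z)`. -/
def anf {n : ℕ} (f : BF n) (α : Fin n → ZMod 2) : ZMod 2 :=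
  ∑ z ∈ Finset.univ.filter (fun z : Fin n → ZMod 2 => ∀ i, z i = 1 → α i = 1), f z

/-- Algebraic degree: the maximum weight of `α` with nonzero ANF coefficient
(0 for the zero function). -/
def degBF {n : ℕ} (f : BF n) : ℕ :=
  (Finset.univ.filter fun α => anf f α ≠ 0).sup wtv

/-- Algebraic immunity: minimum degree of a nonzero annihilator of `f` or of `1 ⊕ f`. -/
noncomputable def AI {n : ℕ} (f : BF n) : ℕ :=
  sInf {d : ℕ | ∃ g : BF n, g ≠ 0 ∧ degBF g = d ∧
    ((∀ x, g x * f x = 0) ∨ (∀ x, g x * (1 + f x) = 0))}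

lemma zmod2_mul_self (a : ZMod 2) : a * a = a := by revert a; decide

lemma anf_add {n : ℕ} (g h : BF n) (α : Fin n → ZMod 2) :
    anf (fun x => g x + h x) α = anf g α + anf h α := by
  simp [anf, Finset.sum_add_distrib]

lemma degBF_add_le {n : ℕ} (g h : BF n) :
    degBF (fun x => g x + h x) ≤ max (degBF g) (degBF h) := by
  apply Finset.sup_le
  intro α hα
  simp only [Finset.mem_filter, Finset.mem_univ, true_and] at hα
  rw [anf_add] at hα
  by_cases hg : anf g α = 0
  · have hh : anf h α ≠ 0 := by
      intro h0; exact hα (by rw [hg, h0, add_zero])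
    exact le_trans (Finset.le_sup (by simp [hh])) (le_max_right _ _)
  · exact le_trans (Finset.le_sup (by simp [hg])) (le_max_left _ _)

/-- If g·f = h and h ≠ 0 then deg h ≥ AI f; moreover if 1 ≤ deg g < AI f then
deg g + deg h ≥ 1 + AI f. -/
theorem deg_of_multiple {n : ℕ} (f g h : BF n)
    (hmul : ∀ x, g x * f x = h x) (hne : h ≠ 0) :
    AI f ≤ degBF h ∧
      (1 ≤ degBF g → degBF g < AI f → 1 + AI f ≤ degBF g + degBF h) := by
  have hhf : ∀ x, h x * f x = h x := by
    intro x
    rw [← hmul x, mul_assoc, zmod2_mul_self]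
  have part1 : AI f ≤ degBF h := by
    apply Nat.sInf_le
    refine ⟨h, hne, rfl, Or.inr ?_⟩
    intro x
    have := hhf x
    ring_nf
    rw [this]
    exact CharTwo.add_self_eq_zero _
  refine ⟨part1, ?_⟩
  intro hg1 hglt
  have hk : ∀ x, (g x + h x) * f x = 0 := by
    intro x
    rw [add_mul, hmul x, hhf x]
    exact CharTwo.add_self_eq_zero _
  have hkne : (fun x => g x + h x) ≠ 0 := by
    intro h0
    have hgh : g = h := by
      funext x
      have := congrFun h0 x
      simp only [Pi.zero_apply] at this
      revert this
      revert x
      intro x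
      generalize g x = a; generalize h x = b
      revert a b; decide
    rw [hgh] at hglt
    exact absurd part1 (not_le.mpr hglt)
  have hAIk : AI f ≤ degBF (fun x => g x + h x) :=
    Nat.sInf_le ⟨_, hkne, rfl, Or.inl hk⟩
  have hle : AI f ≤ degBF h := by
    have := le_trans hAIk (degBF_add_le g h)
    rcases max_cases (degBF g) (degBF h) with ⟨heq, _⟩ | ⟨heq, _⟩
    · rw [heq] at this; omega
    · rw [heq] at this; omega
  omega
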